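/- Let f, g : K → L be contiguous simplicial maps between simplicial complexes. Then their geometric realisations |f|, |g| : |K| → |L| are homotopic via the straight-line homotopy h(x, t) = (1−t)·|f|(x) + t·|g|(x), and moreover h is a stratified map with respect to the product stratification on |K| × [0,1] and the natural stratification of |L| by open simplices. -/
import Mathlib


open Function Set

namespace Stmt13

/-- An abstract simplicial complex on a vertex type `V`. -/
structure ASC (V : Type*) where
  faces : Set (Finset V)
  not_empty_mem : ∅ ∉ faces
  down_closed : ∀ s ∈ faces, ∀ t, t ⊆ s → t ≠ ∅ → t ∈ faces

/-- The geometric realisation of `K`, as the set of barycentric-coordinate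
functions: nonnegative weights supported on a simplex of `K` and summing to `1`. -/
def real {V : Type*} (K : ASC V) : Set (V → ℝ) :=
  { w | (∀ v, 0 ≤ w v) ∧ ∃ s ∈ K.faces, support w ⊆ ↑s ∧ ∑ v ∈ s, w v = 1 }

/-- The open stratum of the realisation corresponding to a simplex `t`:
the points whose support is exactly `t`. -/
def openStratum {V : Type*} (K : ASC V) (t : Finset V) : Set (V → ℝ) :=
  { w | w ∈ real K ∧ support w = ↑t }

/-- A vertex map `φ : V → W` is simplicial from `K` to `L` if it maps simplices of
`K` to simplices of `L`. -/
def IsSimplicialMap {V W : Type*} [DecidableEq W] (K : ASC V) (L : ASC W) (φ : V → W) : Prop :=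
  ∀ s ∈ K.faces, s.image φ ∈ L.faces

/-- `φ` and `ψ` are contiguous: for every simplex `σ` of `K`, the union
`φ(σ) ∪ ψ(σ)` spans a simplex of `L`. -/
def Contiguous {V W : Type*} [DecidableEq W] (K : ASC V) (L : ASC W) (φ ψ : V → W) : Prop :=
  ∀ s ∈ K.faces, s.image φ ∪ s.image ψ ∈ L.faces

/-- The realisation of a simplicial (vertex) map: pushforward of barycentric
coordinates. -/
noncomputable def push {V W : Type*} (φ : V → W) (w : V → ℝ) : W → ℝ :=
  fun u => ∑ᶠ v ∈ { v | φ v = u }, w v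

/-- The straight-line homotopy `h(x, t) = (1-t)·|φ|(x) + t·|ψ|(x)`. -/
noncomputable def lineHomotopy {V W : Type*} (φ ψ : V → W) (w : V → ℝ) (t : ℝ) :
    W → ℝ :=
  (1 - t) • push φ w + t • push ψ w

lemma push_eq_sum {V W : Type*} [DecidableEq W] (φ : V → W) (w : V → ℝ) {s : Finset V}
    (hw : support w ⊆ ↑s) (u : W) :
    push φ w u = ∑ v ∈ s.filter (fun v => φ v = u), w v := by
  classical
  apply finsum_mem_eq_sum_of_inter_support_eq
  ext v
  simp only [mem_inter_iff, mem_setOf_eq, Finset.coe_filter, mem_support]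
  exact ⟨fun ⟨h1, h2⟩ => ⟨⟨hw h2, h1⟩, h2⟩, fun ⟨⟨_, h1⟩, h2⟩ => ⟨h1, h2⟩⟩

lemma push_nonneg {V W : Type*} [DecidableEq W] (φ : V → W) (w : V → ℝ) {s : Finset V}
    (hw : support w ⊆ ↑s) (hpos : ∀ v, 0 ≤ w v) (u : W) : 0 ≤ push φ w u := by
  rw [push_eq_sum φ w hw u]
  exact Finset.sum_nonneg fun v _ => hpos v

lemma sum_push {V W : Type*} [DecidableEq W] (φ : V → W) (w : V → ℝ) {s : Finset V}
    {t : Finset W} (hw : support w ⊆ ↑s) (ht : s.image φ ⊆ t) :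
    ∑ u ∈ t, push φ w u = ∑ v ∈ s, w v := by
  classical
  simp_rw [fun u => push_eq_sum φ w hw u]
  exact Finset.sum_fiberwise_of_maps_to (fun v hv => ht (Finset.mem_image_of_mem φ hv)) w

lemma support_push_subset {V W : Type*} [DecidableEq W] (φ : V → W) (w : V → ℝ) {s : Finset V}
    (hw : support w ⊆ ↑s) : support (push φ w) ⊆ ↑(s.image φ) := by
  intro u hu
  rw [mem_support, push_eq_sum φ w hw u] at hu
  obtain ⟨v, hv, hv0⟩ := Finset.exists_ne_zero_of_sum_ne_zero hu
  rw [Finset.mem_filter] at hv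
  exact Finset.mem_coe.2 (hv.2 ▸ Finset.mem_image_of_mem φ hv.1)

lemma support_push_eq {V W : Type*} [DecidableEq W] (φ : V → W) (w : V → ℝ) {s : Finset V}
    (hs : support w = ↑s) (hpos : ∀ v, 0 ≤ w v) :
    support (push φ w) = ↑(s.image φ) := by
  apply Subset.antisymm (support_push_subset φ w hs.le)
  intro u hu
  rw [Finset.coe_image, mem_image] at hu
  obtain ⟨v, hv, rfl⟩ := hu
  rw [mem_support, push_eq_sum φ w hs.le]
  have hvpos : 0 < w v := lt_of_le_of_ne (hpos v) (Ne.symm (by rwa [← mem_support, hs]))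
  have : 0 < ∑ x ∈ s.filter (fun x => φ x = φ v), w x :=
    Finset.sum_pos' (fun x _ => hpos x) ⟨v, Finset.mem_filter.2 ⟨hv, rfl⟩, hvpos⟩
  exact ne_of_gt this

lemma sum_eq_of_support_subset {V : Type*} (w : V → ℝ) {s s' : Finset V}
    (hw : support w ⊆ ↑s) (hss : s ⊆ s') : ∑ v ∈ s', w v = ∑ v ∈ s, w v :=
  (Finset.sum_subset hss fun v _ hvs => by
    by_contra h; exact hvs (hw (mem_support.2 h))).symm

lemma push_continuous {V W : Type*} [DecidableEq W] (φ : V → W)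
    (K : Set (V → ℝ))
    (hK : ∀ w ∈ K, (∀ v, 0 ≤ w v) ∧ ∃ s : Finset V, support w ⊆ ↑s ∧ ∑ v ∈ s, w v = 1)
    (u : W) :
    Continuous (fun w : K => push φ (w : V → ℝ) u) := by
  classical
  rw [continuous_iff_continuousAt]
  intro w₀
  obtain ⟨hpos₀, s₀, hsupp₀, hsum₀⟩ := hK w₀ w₀.2
  set g : K → ℝ := fun w => ∑ v ∈ s₀.filter (fun v => φ v = u), (w : V → ℝ) v with hg
  set r : K → ℝ := fun w => 1 - ∑ v ∈ s₀, (w : V → ℝ) v with hr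
  have hgc : Continuous g :=
    continuous_finset_sum _ fun v _ => (continuous_apply v).comp continuous_subtype_val
  have hrc : Continuous r := continuous_const.sub
    (continuous_finset_sum _ fun v _ => (continuous_apply v).comp continuous_subtype_val)
  have key : ∀ w : K, g w ≤ push φ (w : V → ℝ) u ∧ push φ (w : V → ℝ) u ≤ g w + r w := by
    intro w
    obtain ⟨hpos, s', hsupp', hsum'⟩ := hK w w.2
    have hsub : support (w : V → ℝ) ⊆ ↑(s₀ ∪ s') := hsupp'.trans (by
      simp [Finset.coe_union])
    rw [push_eq_sum φ (w : V → ℝ) hsub u]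
    have hf : s₀.filter (fun v => φ v = u) ⊆ (s₀ ∪ s').filter (fun v => φ v = u) :=
      Finset.filter_subset_filter _ Finset.subset_union_left
    have hsplit : ∑ v ∈ ((s₀ ∪ s').filter (fun v => φ v = u)) \ (s₀.filter (fun v => φ v = u)),
        (w : V → ℝ) v + g w = ∑ v ∈ (s₀ ∪ s').filter (fun v => φ v = u), (w : V → ℝ) v :=
      Finset.sum_sdiff hf
    have hdiffsub : ((s₀ ∪ s').filter (fun v => φ v = u)) \ (s₀.filter (fun v => φ v = u))
        ⊆ (s₀ ∪ s') \ s₀ := by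
      intro v hv
      simp only [Finset.mem_sdiff, Finset.mem_filter] at hv ⊢
      exact ⟨hv.1.1, fun h => hv.2 ⟨h, hv.1.2⟩⟩
    have hrw : ∑ v ∈ (s₀ ∪ s') \ s₀, (w : V → ℝ) v = r w := by
      have h1 : ∑ v ∈ (s₀ ∪ s') \ s₀, (w : V → ℝ) v + ∑ v ∈ s₀, (w : V → ℝ) v
          = ∑ v ∈ s₀ ∪ s', (w : V → ℝ) v := Finset.sum_sdiff Finset.subset_union_left
      have h2 : ∑ v ∈ s₀ ∪ s', (w : V → ℝ) v = 1 := by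
        rw [sum_eq_of_support_subset (w : V → ℝ) hsupp' Finset.subset_union_right, hsum']
      show _ = 1 - ∑ v ∈ s₀, (w : V → ℝ) v
      linarith
    have hdle : ∑ v ∈ ((s₀ ∪ s').filter (fun v => φ v = u)) \ (s₀.filter (fun v => φ v = u)),
        (w : V → ℝ) v ≤ r w := by
      rw [← hrw]
      exact Finset.sum_le_sum_of_subset_of_nonneg hdiffsub fun v _ _ => hpos v
    have hdnn : 0 ≤ ∑ v ∈ ((s₀ ∪ s').filter (fun v => φ v = u)) \ (s₀.filter (fun v => φ v = u)),
        (w : V → ℝ) v := Finset.sum_nonneg fun v _ => hpos v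
    constructor <;> linarith
  have hgw₀ : g w₀ = push φ (w₀ : V → ℝ) u := (push_eq_sum φ _ hsupp₀ u).symm
  have hrw₀ : r w₀ = 0 := by rw [hr]; simp [hsum₀]
  have h1 : Filter.Tendsto g (nhds w₀) (nhds (push φ (w₀ : V → ℝ) u)) := by
    rw [← hgw₀]; exact hgc.continuousAt
  have h2 : Filter.Tendsto (fun w => g w + r w) (nhds w₀) (nhds (push φ (w₀ : V → ℝ) u)) := by
    have hc : Filter.Tendsto (fun w => g w + r w) (nhds w₀) (nhds (g w₀ + r w₀)) :=
      (hgc.tendsto w₀).add (hrc.tendsto w₀)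
    rwa [hgw₀, hrw₀, add_zero] at hc
  exact tendsto_of_tendsto_of_tendsto_of_le_of_le h1 h2
    (fun w => (key w).1) (fun w => (key w).2)


/-- if `f, g : K → L` are contiguous simplicial maps, then the
straight-line homotopy `h(x,t) = (1−t)|f|(x) + t|g|(x)` is a homotopy from `|f|`
to `|g|` inside `|L|`; it is continuous; and it is a stratified map with respect to
the product stratification of `|K| × [0,1]` (by products of open simplices of `K`
with `{0}`, `{1}`, `(0,1)`) and the stratification of `|L|` by open simplices. -/
theorem contiguous_realisations_stratified_homotopic
    {V W : Type*} [DecidableEq W] (K : ASC V) (L : ASC W) (φ ψ : V → W)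
    (hφ : IsSimplicialMap K L φ) (hψ : IsSimplicialMap K L ψ)
    (hcont : Contiguous K L φ ψ) :
    (∀ w ∈ real K, ∀ t ∈ Icc (0 : ℝ) 1, lineHomotopy φ ψ w t ∈ real L) ∧
    (∀ w, lineHomotopy φ ψ w 0 = push φ w ∧ lineHomotopy φ ψ w 1 = push ψ w) ∧
    Continuous (fun p : real K × Icc (0 : ℝ) 1 =>
      lineHomotopy φ ψ (p.1 : V → ℝ) (p.2 : ℝ)) ∧
    (∀ s ∈ K.faces, ∀ T ∈ ({{0}, {1}, Ioo 0 1} : Set (Set ℝ)),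
      ∃ t ∈ L.faces, ∀ w ∈ openStratum K s, ∀ u ∈ T ∩ Icc (0 : ℝ) 1,
        lineHomotopy φ ψ w u ∈ openStratum L t) := by
  classical
  have hK : ∀ w ∈ real K, (∀ v, 0 ≤ w v) ∧ ∃ s : Finset V, support w ⊆ ↑s ∧ ∑ v ∈ s, w v = 1 := by
    intro w hw
    obtain ⟨h1, s, _, h2, h3⟩ := hw
    exact ⟨h1, s, h2, h3⟩
  have memreal : ∀ w ∈ real K, ∀ t ∈ Icc (0 : ℝ) 1, lineHomotopy φ ψ w t ∈ real L := by
    intro w hw t ht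
    obtain ⟨hpos, s, hsK, hsupp, hsum⟩ := hw
    obtain ⟨ht0, ht1⟩ := ht
    refine ⟨?_, s.image φ ∪ s.image ψ, hcont s hsK, ?_, ?_⟩
    · intro u
      have h1 := push_nonneg φ w hsupp hpos u
      have h2 := push_nonneg ψ w hsupp hpos u
      simp only [lineHomotopy, Pi.add_apply, Pi.smul_apply, smul_eq_mul]
      nlinarith
    · refine (support_add _ _).trans ?_
      refine union_subset ?_ ?_
      · refine (support_smul_subset_right _ _).trans ?_
        refine (support_push_subset φ w hsupp).trans ?_
        rw [Finset.coe_union]; exact subset_union_left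
      · refine (support_smul_subset_right _ _).trans ?_
        refine (support_push_subset ψ w hsupp).trans ?_
        rw [Finset.coe_union]; exact subset_union_right
    · simp only [lineHomotopy, Pi.add_apply, Pi.smul_apply, smul_eq_mul]
      rw [Finset.sum_add_distrib, ← Finset.mul_sum, ← Finset.mul_sum,
        sum_push φ w hsupp Finset.subset_union_left,
        sum_push ψ w hsupp Finset.subset_union_right, hsum]
      ring
  refine ⟨memreal, ?_, ?_, ?_⟩
  · intro w
    constructor <;> · funext u; simp [lineHomotopy]
  · apply continuous_pi
    intro u
    have he : (fun p : real K × Icc (0 : ℝ) 1 => lineHomotopy φ ψ (p.1 : V → ℝ) (p.2 : ℝ) u)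
        = fun p : real K × Icc (0 : ℝ) 1 =>
          (1 - (p.2 : ℝ)) * push φ (p.1 : V → ℝ) u + (p.2 : ℝ) * push ψ (p.1 : V → ℝ) u := by
      funext p
      simp [lineHomotopy]
    rw [he]
    exact ((continuous_const.sub (continuous_subtype_val.comp continuous_snd)).mul
        ((push_continuous φ (real K) hK u).comp continuous_fst)).add
      ((continuous_subtype_val.comp continuous_snd).mul
        ((push_continuous ψ (real K) hK u).comp continuous_fst))
  · intro s hs T hT
    simp only [mem_insert_iff, mem_singleton_iff] at hT
    have hfacts : ∀ w ∈ openStratum K s, (∀ v, 0 ≤ w v) ∧ support w = ↑s ∧ ∑ v ∈ s, w v = 1 := by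
      intro w hw
      obtain ⟨⟨hpos, s', hs'K, hsupp', hsum'⟩, hsuppeq⟩ := hw
      have hss : s ⊆ s' := by
        rw [← Finset.coe_subset]
        exact hsuppeq ▸ hsupp'
      refine ⟨hpos, hsuppeq, ?_⟩
      rw [← sum_eq_of_support_subset w hsuppeq.le hss, hsum']
    rcases hT with rfl | rfl | rfl
    · refine ⟨s.image φ, hφ s hs, ?_⟩
      intro w hw u hu
      obtain ⟨hpos, hsuppeq, hsum⟩ := hfacts w hw
      have hu0 : u = 0 := hu.1
      subst hu0
      have hline : lineHomotopy φ ψ w 0 = push φ w := by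
        funext x; simp [lineHomotopy]
      rw [hline]
      refine ⟨⟨push_nonneg φ w hsuppeq.le hpos, s.image φ, hφ s hs,
        support_push_subset φ w hsuppeq.le, ?_⟩, support_push_eq φ w hsuppeq hpos⟩
      rw [sum_push φ w hsuppeq.le (subset_refl _), hsum]
    · refine ⟨s.image ψ, hψ s hs, ?_⟩
      intro w hw u hu
      obtain ⟨hpos, hsuppeq, hsum⟩ := hfacts w hw
      have hu1 : u = 1 := hu.1
      subst hu1
      have hline : lineHomotopy φ ψ w 1 = push ψ w := by
        funext x; simp [lineHomotopy]
      rw [hline]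
      refine ⟨⟨push_nonneg ψ w hsuppeq.le hpos, s.image ψ, hψ s hs,
        support_push_subset ψ w hsuppeq.le, ?_⟩, support_push_eq ψ w hsuppeq hpos⟩
      rw [sum_push ψ w hsuppeq.le (subset_refl _), hsum]
    · refine ⟨s.image φ ∪ s.image ψ, hcont s hs, ?_⟩
      intro w hw u hu
      obtain ⟨hpos, hsuppeq, hsum⟩ := hfacts w hw
      obtain ⟨⟨hu0, hu1⟩, huI⟩ := hu
      refine ⟨memreal w hw.1 u huI, ?_⟩
      have h1 : support (push φ w) = ↑(s.image φ) := support_push_eq φ w hsuppeq hpos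
      have h2 : support (push ψ w) = ↑(s.image ψ) := support_push_eq ψ w hsuppeq hpos
      ext x
      simp only [mem_support, Finset.coe_union, mem_union, ← h1, ← h2]
      have e : lineHomotopy φ ψ w u x = (1 - u) * push φ w x + u * push ψ w x := by
        simp [lineHomotopy]
      have nφ := push_nonneg φ w hsuppeq.le hpos x
      have nψ := push_nonneg ψ w hsuppeq.le hpos x
      rw [e]
      constructor
      · intro hne
        by_contra hc
        push_neg at hc
        exact hne (by rw [hc.1, hc.2]; ring)
      · intro h hz
        rcases h with h | h
        · have hp : 0 < push φ w x := lt_of_le_of_ne nφ (Ne.symm h)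
          nlinarith
        · have hp : 0 < push ψ w x := lt_of_le_of_ne nψ (Ne.symm h)
          nlinarith


end Stmt13
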